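/- arXiv:2104.00463 — 4 statements merged into one kernel-verified Lean document; each statement's English description precedes it below -/
import Mathlib

section
/- For all real numbers a and b, |a+b|·log(log(|a+b|+e)) ≤ |a|·log(log(2|a|+e)) + |b|·log(log(2|b|+e)). -/
open Real Set

private lemma gpos {t : ℝ} (ht : 0 ≤ t) : 1 ≤ Real.log (t + Real.exp 1) := by
  have : Real.exp 1 ≤ t + Real.exp 1 := by linarith
  calc (1 : ℝ) = Real.log (Real.exp 1) := (Real.log_exp 1).symm
    _ ≤ Real.log (t + Real.exp 1) := Real.log_le_log (Real.exp_pos 1) this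

private lemma gmono {t t' : ℝ} (ht : 0 ≤ t) (h : t ≤ t') :
    Real.log (Real.log (t + Real.exp 1)) ≤ Real.log (Real.log (t' + Real.exp 1)) := by
  have h1 : 1 ≤ Real.log (t + Real.exp 1) := gpos ht
  exact Real.log_le_log (by linarith) (Real.log_le_log (by positivity) (by linarith))

noncomputable def myF : ℝ → ℝ := fun t => t * Real.log (Real.log (t + Real.exp 1))

noncomputable def myF' : ℝ → ℝ := fun t =>
  Real.log (Real.log (t + Real.exp 1)) +
    t * ((Real.log (t + Real.exp 1))⁻¹ * (t + Real.exp 1)⁻¹)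

private lemma hasDerivAt_inner {t : ℝ} (ht : 0 ≤ t) :
    HasDerivAt (fun s : ℝ => Real.log (s + Real.exp 1)) (t + Real.exp 1)⁻¹ t := by
  have h0 : (0:ℝ) < t + Real.exp 1 := by have := Real.exp_pos 1; linarith
  have h1 : HasDerivAt (fun s : ℝ => s + Real.exp 1) 1 t := by
    simpa using (hasDerivAt_id t).add_const (Real.exp 1)
  have := (Real.hasDerivAt_log h0.ne').comp t h1
  simpa [Function.comp_def] using this

private lemma hasDerivAt_g {t : ℝ} (ht : 0 ≤ t) :
    HasDerivAt (fun s : ℝ => Real.log (Real.log (s + Real.exp 1)))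
      ((Real.log (t + Real.exp 1))⁻¹ * (t + Real.exp 1)⁻¹) t := by
  have hL : 1 ≤ Real.log (t + Real.exp 1) := gpos ht
  have := (Real.hasDerivAt_log (by linarith : Real.log (t + Real.exp 1) ≠ 0)).comp t
    (hasDerivAt_inner ht)
  exact this

private lemma hasDerivAt_myF {t : ℝ} (ht : 0 ≤ t) :
    HasDerivAt myF (myF' t) t := by
  have := (hasDerivAt_id t).mul (hasDerivAt_g ht)
  refine this.congr_deriv ?_
  simp [myF']

private lemma hasDerivAt_myF' {t : ℝ} (ht : 0 ≤ t) :
    HasDerivAt myF'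
      ((Real.log (t + Real.exp 1))⁻¹ * (t + Real.exp 1)⁻¹ +
        (1 * ((Real.log (t + Real.exp 1))⁻¹ * (t + Real.exp 1)⁻¹) +
          t * (-((t + Real.exp 1)⁻¹) / (Real.log (t + Real.exp 1)) ^ 2 * (t + Real.exp 1)⁻¹ +
            (Real.log (t + Real.exp 1))⁻¹ * (-1 / (t + Real.exp 1) ^ 2)))) t := by
  have h0 : (0:ℝ) < t + Real.exp 1 := by have := Real.exp_pos 1; linarith
  have hL : 1 ≤ Real.log (t + Real.exp 1) := gpos ht
  have hinv1 : HasDerivAt (fun s : ℝ => (Real.log (s + Real.exp 1))⁻¹)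
      (-((t + Real.exp 1)⁻¹) / (Real.log (t + Real.exp 1)) ^ 2) t :=
    (hasDerivAt_inner ht).inv (by linarith)
  have hinv2 : HasDerivAt (fun s : ℝ => (s + Real.exp 1)⁻¹)
      (-1 / (t + Real.exp 1) ^ 2) t := by
    have h1 : HasDerivAt (fun s : ℝ => s + Real.exp 1) 1 t := by
      simpa using (hasDerivAt_id t).add_const (Real.exp 1)
    exact h1.inv h0.ne'
  have hprod := hinv1.mul hinv2
  have := (hasDerivAt_g ht).add ((hasDerivAt_id t).mul hprod)
  exact this

private lemma convex_myF : ConvexOn ℝ (Set.Ici (0:ℝ)) myF := by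
  have hint : interior (Set.Ici (0:ℝ)) = Set.Ioi 0 := interior_Ici
  have hderiv_eq : ∀ x ∈ Set.Ioi (0:ℝ), deriv myF x = myF' x := fun x hx =>
    (hasDerivAt_myF (le_of_lt hx)).deriv
  have hEv : ∀ x ∈ Set.Ioi (0:ℝ), deriv myF =ᶠ[nhds x] myF' := by
    intro x hx
    filter_upwards [isOpen_Ioi.mem_nhds hx] with y hy using hderiv_eq y hy
  apply convexOn_of_deriv2_nonneg (convex_Ici 0)
  · -- continuity
    intro t ht
    have h0 : (0:ℝ) < t + Real.exp 1 := by
      have := Real.exp_pos 1; simp only [Set.mem_Ici] at ht; linarith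
    have hL : 1 ≤ Real.log (t + Real.exp 1) := gpos ht
    exact (hasDerivAt_myF ht).continuousAt.continuousWithinAt
  · rw [hint]
    intro x hx
    exact (hasDerivAt_myF (le_of_lt hx)).differentiableAt.differentiableWithinAt
  · rw [hint]
    intro x hx
    have : DifferentiableAt ℝ myF' x := (hasDerivAt_myF' (le_of_lt hx)).differentiableAt
    exact ((hEv x hx).differentiableAt_iff.mpr this).differentiableWithinAt
  · rw [hint]
    intro x hx
    have hx0 : (0:ℝ) ≤ x := le_of_lt hx
    have h0 : (0:ℝ) < x + Real.exp 1 := by have := Real.exp_pos 1; linarith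
    have hL : 1 ≤ Real.log (x + Real.exp 1) := gpos hx0
    have hd2 : deriv^[2] myF x = deriv myF' x := by
      show deriv (deriv myF) x = deriv myF' x
      exact (hEv x hx).deriv_eq
    rw [hd2, (hasDerivAt_myF' hx0).deriv]
    set L := Real.log (x + Real.exp 1) with hLdef
    set P := x + Real.exp 1 with hPdef
    have hP : (0:ℝ) < P := h0
    have hLpos : (0:ℝ) < L := by linarith
    have key : L⁻¹ * P⁻¹ + (1 * (L⁻¹ * P⁻¹) + x * (-P⁻¹ / L ^ 2 * P⁻¹ + L⁻¹ * (-1 / P ^ 2)))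
        = (x * (L - 1) + 2 * Real.exp 1 * L) / (P ^ 2 * L ^ 2) := by
      field_simp
      ring_nf
      rw [hPdef]; ring
    rw [key]
    apply div_nonneg
    · have := Real.exp_pos 1
      nlinarith
    · positivity

private lemma midpoint_ineq {x y : ℝ} (hx : 0 ≤ x) (hy : 0 ≤ y) :
    myF (x + y) ≤ (myF (2 * x) + myF (2 * y)) / 2 := by
  have h := convex_myF.2 (Set.mem_Ici.mpr (by linarith : (0:ℝ) ≤ 2 * x))
    (Set.mem_Ici.mpr (by linarith : (0:ℝ) ≤ 2 * y))
    (by norm_num : (0:ℝ) ≤ (1:ℝ)/2) (by norm_num : (0:ℝ) ≤ (1:ℝ)/2) (by norm_num)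
  have e1 : ((1:ℝ)/2) • (2 * x) + ((1:ℝ)/2) • (2 * y) = x + y := by
    simp [smul_eq_mul]; try ring
  rw [e1] at h
  calc myF (x + y) ≤ ((1:ℝ)/2) • myF (2 * x) + ((1:ℝ)/2) • myF (2 * y) := h
    _ = (myF (2 * x) + myF (2 * y)) / 2 := by simp [smul_eq_mul]; try ring

/-- For all real `a`, `b`,
`|a+b|·log(log(|a+b|+e)) ≤ |a|·log(log(2|a|+e)) + |b|·log(log(2|b|+e))`. -/
theorem abs_mul_log_log_add_le (a b : ℝ) :
    |a + b| * Real.log (Real.log (|a + b| + Real.exp 1)) ≤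
      |a| * Real.log (Real.log (2 * |a| + Real.exp 1)) +
        |b| * Real.log (Real.log (2 * |b| + Real.exp 1)) := by
  have habs : |a + b| ≤ |a| + |b| := abs_add_le a b
  have hs0 : (0:ℝ) ≤ |a + b| := abs_nonneg _
  have hx : (0:ℝ) ≤ |a| := abs_nonneg a
  have hy : (0:ℝ) ≤ |b| := abs_nonneg b
  have hgs : Real.log (Real.log (|a + b| + Real.exp 1)) ≤
      Real.log (Real.log (|a| + |b| + Real.exp 1)) := gmono hs0 habs
  have hA0 : 0 ≤ Real.log (Real.log (|a| + |b| + Real.exp 1)) :=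
    Real.log_nonneg (gpos (by linarith))
  have step1 : |a + b| * Real.log (Real.log (|a + b| + Real.exp 1)) ≤ myF (|a| + |b|) := by
    calc |a + b| * Real.log (Real.log (|a + b| + Real.exp 1))
        ≤ |a + b| * Real.log (Real.log (|a| + |b| + Real.exp 1)) :=
          mul_le_mul_of_nonneg_left hgs hs0
      _ ≤ (|a| + |b|) * Real.log (Real.log (|a| + |b| + Real.exp 1)) :=
          mul_le_mul_of_nonneg_right habs hA0
      _ = myF (|a| + |b|) := rfl
  have step2 := midpoint_ineq hx hy
  have e2 : myF (2 * |a|) = 2 * |a| * Real.log (Real.log (2 * |a| + Real.exp 1)) := rfl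
  have e3 : myF (2 * |b|) = 2 * |b| * Real.log (Real.log (2 * |b| + Real.exp 1)) := rfl
  rw [e2, e3] at step2
  linarith
end

section
/- For every ε ∈ (0,1) and every x ∈ ℝ, log(log(|x|+e)) ≤ log(2·log(ε|x|+e)) + log(log(ε⁻¹+e)). -/
/-- For every `ε ∈ (0,1)` and every real `x`,
`log(log(|x|+e)) ≤ log(2·log(ε|x|+e)) + log(log(ε⁻¹+e))`. -/
theorem log_log_le_log_two_log_add (ε : ℝ) (hε : ε ∈ Set.Ioo (0 : ℝ) 1) (x : ℝ) :
    Real.log (Real.log (|x| + Real.exp 1)) ≤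
      Real.log (2 * Real.log (ε * |x| + Real.exp 1)) +
        Real.log (Real.log (ε⁻¹ + Real.exp 1)) := by
  obtain ⟨hε0, hε1⟩ := hε
  have hx : 0 ≤ |x| := abs_nonneg x
  have hεx : 0 ≤ ε * |x| := by positivity
  have hinv : (1:ℝ) ≤ ε⁻¹ := by
    rw [le_inv_comm₀ one_pos hε0]; simpa using hε1.le
  have he : (0:ℝ) < Real.exp 1 := Real.exp_pos 1
  have he1 : (1:ℝ) ≤ Real.exp 1 := Real.one_le_exp (by norm_num)
  have ha1 : 1 ≤ Real.log (ε * |x| + Real.exp 1) := by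
    have h := Real.log_le_log he (show Real.exp 1 ≤ ε * |x| + Real.exp 1 by linarith)
    rwa [Real.log_exp] at h
  have hb1 : 1 ≤ Real.log (ε⁻¹ + Real.exp 1) := by
    have h := Real.log_le_log he (show Real.exp 1 ≤ ε⁻¹ + Real.exp 1 by linarith)
    rwa [Real.log_exp] at h
  set a := Real.log (ε * |x| + Real.exp 1) with haa
  set b := Real.log (ε⁻¹ + Real.exp 1) with hbb
  have hmul : ε * ε⁻¹ = 1 := mul_inv_cancel₀ hε0.ne'
  have hprod : |x| + Real.exp 1 ≤ (ε * |x| + Real.exp 1) * (ε⁻¹ + Real.exp 1) := by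
    nlinarith
  have hlog1 : Real.log (|x| + Real.exp 1) ≤ a + b := by
    calc Real.log (|x| + Real.exp 1)
        ≤ Real.log ((ε * |x| + Real.exp 1) * (ε⁻¹ + Real.exp 1)) :=
          Real.log_le_log (by positivity) hprod
      _ = a + b := Real.log_mul (by positivity) (by positivity)
  have hab : a + b ≤ 2 * a * b := by nlinarith
  calc Real.log (Real.log (|x| + Real.exp 1))
      ≤ Real.log (2 * a * b) := by
        apply Real.log_le_log
        · have h := Real.log_le_log he (show Real.exp 1 ≤ |x| + Real.exp 1 by linarith)
          rw [Real.log_exp] at h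
          linarith
        · linarith
    _ = Real.log (2 * a) + Real.log b := by
        rw [← Real.log_mul (by positivity) (by positivity)]
end

section
/- Let G : ℝ → ℝ be measurable and for ε > 0 define the averaging operator (𝓐_ε G)(X) := (1/ε)·∫_X^{X+ε} G(s) ds. Then for every ε ∈ (0,1), ∫_ℝ (1+|X|)·(𝓐_ε G)(X)² dX ≤ (3/2)·∫_ℝ (1+|s|)·G(s)² ds. -/
open MeasureTheory
open scoped ENNReal
open intervalIntegral

lemma weight_int_bound (ε s : ℝ) (hε0 : 0 < ε) (hε1 : ε < 1) :
    ∫ x in (s - ε)..s, (1 + |x|) ≤ 3 / 2 * (ε * (1 + |s|)) := by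
  have hle : s - ε ≤ s := by linarith
  have h1 : ∫ x in (s - ε)..s, (1 + |x|) ≤ ∫ x in (s - ε)..s, ((1 + |s| + s) - x) := by
    apply intervalIntegral.integral_mono_on hle
    · exact (continuous_const.add _root_.continuous_abs).intervalIntegrable _ _
    · exact (continuous_const.sub continuous_id).intervalIntegrable _ _
    · intro x hx
      have h2 := abs_sub_abs_le_abs_sub x s
      have h3 : |x - s| = s - x := by
        rw [abs_of_nonpos (by linarith [hx.2])]; ring
      linarith [hx.2]
  have h2 : ∫ x in (s - ε)..s, ((1 + |s| + s) - x)
      = (1 + |s| + s) * ε - (s ^ 2 - (s - ε) ^ 2) / 2 := by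
    rw [intervalIntegral.integral_sub (intervalIntegrable_const) (intervalIntegral.intervalIntegrable_id),
      intervalIntegral.integral_const, integral_id, smul_eq_mul]
    ring
  have h4 : 0 ≤ |s| := abs_nonneg s
  nlinarith

lemma cs_step (G : ℝ → ℝ) (hG : Measurable G) (ε X : ℝ) (hε0 : 0 < ε) :
    ENNReal.ofReal ((∫ s in X..(X + ε), G s) ^ 2)
      ≤ ENNReal.ofReal ε * ∫⁻ s in Set.Ioc X (X + ε), ENNReal.ofReal (G s ^ 2) := by
  have hle : X ≤ X + ε := by linarith
  by_cases hint : IntegrableOn G (Set.Ioc X (X + ε)) volume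
  · set μ := volume.restrict (Set.Ioc X (X + ε)) with hμ
    set f : ℝ → ℝ≥0∞ := fun s => ENNReal.ofReal |G s| with hf
    have habs : |∫ s in X..(X + ε), G s| ≤ ∫ s in Set.Ioc X (X + ε), |G s| := by
      rw [← intervalIntegral.integral_of_le (f := fun s => |G s|) (μ := volume) hle]
      exact intervalIntegral.abs_integral_le_integral_abs hle
    have h1 : ENNReal.ofReal ((∫ s in X..(X + ε), G s) ^ 2)
        = ENNReal.ofReal (|∫ s in X..(X + ε), G s|) ^ 2 := by
      rw [← ENNReal.ofReal_pow (abs_nonneg _), sq_abs]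
    have h2 : ENNReal.ofReal (|∫ s in X..(X + ε), G s|) ≤ ∫⁻ s, f s ∂μ := by
      calc ENNReal.ofReal (|∫ s in X..(X + ε), G s|)
          ≤ ENNReal.ofReal (∫ s in Set.Ioc X (X + ε), |G s|) := ENNReal.ofReal_le_ofReal habs
        _ = ∫⁻ s, f s ∂μ :=
            ofReal_integral_eq_lintegral_ofReal hint.abs (ae_of_all _ fun s => abs_nonneg _)
    have hconj : Real.HolderConjugate 2 2 := Real.HolderConjugate.two_two
    have hCS := ENNReal.lintegral_mul_le_Lp_mul_Lq μ hconj
      (hG.abs.ennreal_ofReal.aemeasurable) (aemeasurable_const : AEMeasurable (fun _ : ℝ => (1:ℝ≥0∞)) μ)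
    have hCS' : (∫⁻ s, f s ∂μ)
        ≤ (∫⁻ s, f s ^ (2:ℝ) ∂μ) ^ (1/(2:ℝ)) * (∫⁻ _ : ℝ, (1:ℝ≥0∞) ^ (2:ℝ) ∂μ) ^ (1/(2:ℝ)) := by
      simpa [hf] using hCS
    have hfsq : ∀ s, f s ^ (2:ℝ) = ENNReal.ofReal (G s ^ 2) := by
      intro s
      rw [hf, ENNReal.ofReal_rpow_of_nonneg (abs_nonneg _) (by norm_num)]
      norm_num [sq_abs]
    have hone : ∫⁻ _ : ℝ, (1:ℝ≥0∞) ^ (2:ℝ) ∂μ = ENNReal.ofReal ε := by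
      simp [hμ, Real.volume_Ioc]
    rw [h1]
    calc ENNReal.ofReal (|∫ s in X..(X + ε), G s|) ^ 2 ≤ (∫⁻ s, f s ∂μ) ^ 2 :=
          pow_le_pow_left₀ zero_le h2 2
      _ ≤ ((∫⁻ s, f s ^ (2:ℝ) ∂μ) ^ (1/(2:ℝ)) * (∫⁻ _, (1:ℝ≥0∞) ^ (2:ℝ) ∂μ) ^ (1/(2:ℝ))) ^ 2 :=
          pow_le_pow_left₀ zero_le hCS' 2
      _ = (∫⁻ s, f s ^ (2:ℝ) ∂μ) * (∫⁻ _, (1:ℝ≥0∞) ^ (2:ℝ) ∂μ) := by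
          rw [mul_pow, ← ENNReal.rpow_natCast (_ ^ (1/(2:ℝ))) 2,
            ← ENNReal.rpow_natCast (_ ^ (1/(2:ℝ))) 2, ← ENNReal.rpow_mul, ← ENNReal.rpow_mul]
          norm_num
      _ = ENNReal.ofReal ε * ∫⁻ s, ENNReal.ofReal (G s ^ 2) ∂μ := by
          simp only [hfsq, hone]; ring
  · rw [intervalIntegral.integral_undef]
    · simp
    · exact fun h => hint ((intervalIntegrable_iff_integrableOn_Ioc_of_le hle).mp h)

/-- for measurable `G : ℝ → ℝ` and `ε ∈ (0,1)`, the sliding average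
`(𝓐_ε G)(X) = ε⁻¹ ∫_X^{X+ε} G` satisfies
`∫ (1+|X|) (𝓐_ε G)(X)² dX ≤ (3/2) ∫ (1+|s|) G(s)² ds`,
where both sides are interpreted in `[0,∞]`. -/
theorem sliding_average_weighted_L2_bound (G : ℝ → ℝ) (hG : Measurable G)
    (ε : ℝ) (hε : ε ∈ Set.Ioo (0 : ℝ) 1) :
    (∫⁻ X : ℝ, ENNReal.ofReal ((1 + |X|) * (ε⁻¹ * ∫ s in X..(X + ε), G s) ^ 2)) ≤
      ENNReal.ofReal (3 / 2) * ∫⁻ s : ℝ, ENNReal.ofReal ((1 + |s|) * (G s) ^ 2) := by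
    obtain ⟨hε0, hε1⟩ := hε
    set W : ℝ → ℝ≥0∞ := fun X => ENNReal.ofReal (1 + |X|) with hW
    set g2 : ℝ → ℝ≥0∞ := fun s => ENNReal.ofReal (G s ^ 2) with hg2
    have hWm : Measurable W := (continuous_const.add _root_.continuous_abs).measurable.ennreal_ofReal
    have hg2m : Measurable g2 := (hG.pow_const 2).ennreal_ofReal
    set L : ℝ → ℝ≥0∞ := fun X => ∫⁻ s in Set.Ioc X (X + ε), g2 s with hL
    -- pointwise Cauchy-Schwarz bound
    have hA : ∀ X : ℝ, ENNReal.ofReal ((1 + |X|) * (ε⁻¹ * ∫ s in X..(X + ε), G s) ^ 2)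
        ≤ ENNReal.ofReal ε⁻¹ * (W X * L X) := by
      intro X
      calc ENNReal.ofReal ((1 + |X|) * (ε⁻¹ * ∫ s in X..(X + ε), G s) ^ 2)
          = W X * (ENNReal.ofReal (ε⁻¹ ^ 2) *
              ENNReal.ofReal ((∫ s in X..(X + ε), G s) ^ 2)) := by
            rw [ENNReal.ofReal_mul (by positivity), mul_pow,
              ENNReal.ofReal_mul (by positivity)]
        _ ≤ W X * (ENNReal.ofReal (ε⁻¹ ^ 2) * (ENNReal.ofReal ε * L X)) := by
            gcongr
            exact cs_step G hG ε X hε0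
        _ = ENNReal.ofReal ε⁻¹ * (W X * L X) := by
            rw [← mul_assoc (ENNReal.ofReal (ε⁻¹ ^ 2)), ← ENNReal.ofReal_mul (by positivity)]
            have h : ε⁻¹ ^ 2 * ε = ε⁻¹ := by field_simp
            rw [h]; ring
    -- Tonelli
    have key : ∫⁻ X, W X * L X = ∫⁻ s, g2 s * ∫⁻ X in Set.Ico (s - ε) s, W X := by
      set F : ℝ → ℝ → ℝ≥0∞ :=
        fun X s => (Set.Ioc X (X + ε)).indicator (fun t => W X * g2 t) s with hF
      have hFm : AEMeasurable (Function.uncurry F) ((volume : Measure ℝ).prod volume) := by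
        have hset : MeasurableSet {q : ℝ × ℝ | q.1 < q.2 ∧ q.2 ≤ q.1 + ε} := by
          exact (measurableSet_lt measurable_fst measurable_snd).inter
            (measurableSet_le measurable_snd (measurable_fst.add_const ε))
        have heq : Function.uncurry F =
            fun p : ℝ × ℝ => ({q : ℝ × ℝ | q.1 < q.2 ∧ q.2 ≤ q.1 + ε}).indicator
              (fun q => W q.1 * g2 q.2) p := by
          funext p
          simp only [Function.uncurry, hF, Set.indicator_apply, Set.mem_Ioc, Set.mem_setOf_eq]
        rw [heq]
        exact (((hWm.comp measurable_fst).mul (hg2m.comp measurable_snd)).indicator hset).aemeasurable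
      have h1 : ∀ X, W X * L X = ∫⁻ s, F X s := by
        intro X
        rw [hF]
        simp only
        rw [lintegral_indicator measurableSet_Ioc _, hL]
        simp only
        rw [lintegral_const_mul _ hg2m]
      have h2 : ∀ s, (∫⁻ X, F X s) = g2 s * ∫⁻ X in Set.Ico (s - ε) s, W X := by
        intro s
        have hiff : ∀ X : ℝ, (s ∈ Set.Ioc X (X + ε)) = (X ∈ Set.Ico (s - ε) s) := by
          intro X
          simp only [Set.mem_Ioc, Set.mem_Ico, eq_iff_iff]
          constructor <;> intro h <;> exact ⟨by linarith [h.1, h.2], by linarith [h.1, h.2]⟩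
        calc (∫⁻ X, F X s)
            = ∫⁻ X, (Set.Ico (s - ε) s).indicator (fun X => W X * g2 s) X := by
              apply lintegral_congr
              intro X
              rw [hF]
              simp only [Set.indicator_apply, hiff X]
          _ = ∫⁻ X in Set.Ico (s - ε) s, W X * g2 s := by
              rw [lintegral_indicator measurableSet_Ico _]
          _ = g2 s * ∫⁻ X in Set.Ico (s - ε) s, W X := by
              rw [lintegral_mul_const _ hWm, mul_comm]
      calc ∫⁻ X, W X * L X = ∫⁻ X, ∫⁻ s, F X s := by exact lintegral_congr h1
        _ = ∫⁻ s, ∫⁻ X, F X s := lintegral_lintegral_swap hFm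
        _ = ∫⁻ s, g2 s * ∫⁻ X in Set.Ico (s - ε) s, W X := lintegral_congr h2
    -- bound on inner weight integral
    have hC : ∀ s : ℝ, (∫⁻ X in Set.Ico (s - ε) s, W X)
        ≤ ENNReal.ofReal (3 / 2 * (ε * (1 + |s|))) := by
      intro s
      have hint : IntegrableOn (fun X : ℝ => 1 + |X|) (Set.Ico (s - ε) s) volume :=
        ((continuous_const.add _root_.continuous_abs).integrableOn_Icc).mono_set
          Set.Ico_subset_Icc_self
      rw [hW]
      simp only
      rw [← ofReal_integral_eq_lintegral_ofReal hint (ae_of_all _ fun X => by positivity)]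
      apply ENNReal.ofReal_le_ofReal
      rw [setIntegral_congr_set Ico_ae_eq_Ioc, ← intervalIntegral.integral_of_le (by linarith)]
      exact weight_int_bound ε s hε0 hε1
    -- assemble
    calc (∫⁻ X : ℝ, ENNReal.ofReal ((1 + |X|) * (ε⁻¹ * ∫ s in X..(X + ε), G s) ^ 2))
        ≤ ∫⁻ X, ENNReal.ofReal ε⁻¹ * (W X * L X) := lintegral_mono hA
      _ = ENNReal.ofReal ε⁻¹ * ∫⁻ X, W X * L X :=
          lintegral_const_mul' _ _ ENNReal.ofReal_ne_top
      _ = ENNReal.ofReal ε⁻¹ * ∫⁻ s, g2 s * ∫⁻ X in Set.Ico (s - ε) s, W X := by rw [key]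
      _ ≤ ENNReal.ofReal ε⁻¹ * ∫⁻ s, g2 s * ENNReal.ofReal (3 / 2 * (ε * (1 + |s|))) := by
          gcongr with s
          exact hC s
      _ = ENNReal.ofReal (3 / 2) * ∫⁻ s : ℝ, ENNReal.ofReal ((1 + |s|) * (G s) ^ 2) := by
          rw [← lintegral_const_mul' (ENNReal.ofReal ε⁻¹) _ ENNReal.ofReal_ne_top,
            ← lintegral_const_mul' (ENNReal.ofReal (3 / 2)) _ ENNReal.ofReal_ne_top]
          apply lintegral_congr
          intro s
          rw [hg2]
          simp only
          rw [← ENNReal.ofReal_mul (by positivity), ← ENNReal.ofReal_mul (by positivity),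
            ← ENNReal.ofReal_mul (by norm_num)]
          congr 1
          field_simp
end

section
/- Let m, k : ℤ → ℝ satisfy 0 < a_m ≤ m(j) ≤ b_m and 0 < a_k ≤ k(j) ≤ b_k for all j. Let T > 0 and let η, ξ : ℝ → ℓ²(ℤ;ℝ) be continuously differentiable curves and ρ₁, ρ₂ : ℝ → ℓ²(ℤ;ℝ) be continuous, satisfying for all t and j: (d/dt)η(t)(j) = k(j)·[ξ(t)(j+1) − ξ(t)(j) + ρ₁(t)(j)] and (d/dt)ξ(t)(j) = [η(t)(j) − η(t)(j−1) + ρ₂(t)(j)]/m(j). Then there is a constant C depending only on a_k, b_k, a_m, b_m such that sup_{|t| ≤ T} (‖η(t)‖_{ℓ²}² + ‖ξ(t)‖_{ℓ²}²)^{1/2} ≤ C·(‖η(0)‖_{ℓ²}² + ‖ξ(0)‖_{ℓ²}²)^{1/2} + C·T·sup_{|t| ≤ T} (‖ρ₁(t)‖_{ℓ²}² + ‖ρ₂(t)‖_{ℓ²}²)^{1/2}. -/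
open MeasureTheory
open scoped ENNReal

open RealInnerProductSpace

noncomputable abbrev L2Z := lp (fun _ : ℤ => ℝ) 2

lemma summable_sq (f : L2Z) : Summable (fun j => (f j)^2) := by
  have := (memℓp_gen_iff (p := 2) (by norm_num)).1 (lp.memℓp f)
  simpa [Real.norm_eq_abs, sq_abs, ENNReal.toReal_ofNat, Real.rpow_natCast] using this

lemma norm_sq_eq_tsum (f : L2Z) : ‖f‖^2 = ∑' j, (f j)^2 := by
  rw [← real_inner_self_eq_norm_sq, lp.inner_eq_tsum]
  simp [RCLike.inner_apply, sq]

lemma inner_eq_tsum_mul (f g : L2Z) : ⟪f, g⟫ = ∑' j, f j * g j := by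
  rw [lp.inner_eq_tsum]; simp [RCLike.inner_apply, mul_comm]

lemma sq_bound {w : ℤ → ℝ} {B : ℝ} (hw : ∀ j, |w j| ≤ B) (f : L2Z) (j : ℤ) :
    ‖w j * f j‖ ^ (2:ℝ≥0∞).toReal ≤ B^2 * (f j)^2 := by
  have h3 : w j ^2 ≤ B^2 := by
    rw [← sq_abs]; exact pow_le_pow_left₀ (abs_nonneg _) (hw j) 2
  simp only [Real.norm_eq_abs, ENNReal.toReal_ofNat, Real.rpow_two, ← sq, abs_mul, mul_pow,
    sq_abs]
  exact mul_le_mul_of_nonneg_right h3 (sq_nonneg _)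

lemma memℓp_mul {w : ℤ → ℝ} {B : ℝ} (hw : ∀ j, |w j| ≤ B) (f : L2Z) :
    Memℓp (fun j => w j * f j) 2 := by
  apply memℓp_gen
  exact Summable.of_nonneg_of_le (fun j => by positivity) (sq_bound hw f)
    ((summable_sq f).mul_left _)

/-- multiplication by a bounded sequence as a CLM on ℓ². -/
noncomputable def mulOp (w : ℤ → ℝ) {B : ℝ} (hB : 0 ≤ B) (hw : ∀ j, |w j| ≤ B) :
    L2Z →L[ℝ] L2Z := by
  refine LinearMap.mkContinuous
    { toFun := fun f => ⟨fun j => w j * f j, memℓp_mul hw f⟩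
      map_add' := ?_
      map_smul' := ?_ } B ?_
  · intro f g; ext j; simp [lp.coeFn_add, mul_add]; rfl
  · intro c f; ext j; simp [lp.coeFn_smul, mul_comm, mul_left_comm]
  · intro f
    apply lp.norm_le_of_tsum_le (by norm_num) (by positivity)
    have h1 : ∑' j, ‖w j * f j‖ ^ (2:ℝ≥0∞).toReal ≤ B^2 * ‖f‖^2 := by
      rw [norm_sq_eq_tsum, ← tsum_mul_left]
      exact Summable.tsum_le_tsum (sq_bound hw f)
        (Summable.of_nonneg_of_le (fun j => by positivity) (sq_bound hw f)
          ((summable_sq f).mul_left _)) ((summable_sq f).mul_left _)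
    calc (∑' j, ‖(fun j => w j * f j) j‖ ^ (2:ℝ≥0∞).toReal) ≤ B^2 * ‖f‖^2 := h1
      _ = (B * ‖f‖) ^ (2:ℝ≥0∞).toReal := by
        simp [ENNReal.toReal_ofNat, Real.rpow_two, mul_pow, sq]; ring
  
lemma mulOp_apply (w : ℤ → ℝ) {B : ℝ} (hB : 0 ≤ B) (hw : ∀ j, |w j| ≤ B) (f : L2Z) (j : ℤ) :
    (mulOp w hB hw f) j = w j * f j := rfl

lemma summable_mul_sq {f g : ℤ → ℝ} (hf : Summable fun j => (f j)^2)
    (hg : Summable fun j => (g j)^2) : Summable fun j => f j * g j := by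
  apply Summable.of_abs
  apply Summable.of_nonneg_of_le (fun j => abs_nonneg _)
    (fun j => ?_) (((hf.add hg).div_const 2))
  have := sq_nonneg (|f j| - |g j|)
  rw [abs_mul]
  show _ ≤ ((f j)^2 + (g j)^2)/2
  nlinarith [sq_abs (f j), sq_abs (g j)]

lemma cauchy2 {a b c d : ℝ} (ha : 0 ≤ a) (hb : 0 ≤ b) (hc : 0 ≤ c) (hd : 0 ≤ d) :
    a * c + b * d ≤ Real.sqrt (a^2 + b^2) * Real.sqrt (c^2 + d^2) := by
  have h1 : (a*c + b*d)^2 ≤ (a^2+b^2) * (c^2+d^2) := by nlinarith [sq_nonneg (a*d - b*c)]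
  have h2 : a*c + b*d = Real.sqrt ((a*c+b*d)^2) := by
    rw [Real.sqrt_sq (by positivity)]
  rw [h2, ← Real.sqrt_mul (by positivity)]
  exact Real.sqrt_le_sqrt h1

lemma sqrt_add_le' {x ε : ℝ} (hx : 0 ≤ x) (hε : 0 ≤ ε) :
    Real.sqrt (x + ε) ≤ Real.sqrt x + Real.sqrt ε := by
  have h : x + ε ≤ (Real.sqrt x + Real.sqrt ε)^2 := by
    nlinarith [Real.sq_sqrt hx, Real.sq_sqrt hε, Real.sqrt_nonneg x, Real.sqrt_nonneg ε]
  calc Real.sqrt (x+ε) ≤ Real.sqrt ((Real.sqrt x + Real.sqrt ε)^2) := Real.sqrt_le_sqrt h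
    _ = Real.sqrt x + Real.sqrt ε := Real.sqrt_sq (by positivity)

/-- weighted sums with bounded nonneg weights -/
lemma tsum_wsq_summable {w : ℤ → ℝ} {B : ℝ} (hw : ∀ j, 0 ≤ w j ∧ w j ≤ B) (f : L2Z) :
    Summable (fun j => w j * (f j)^2) := by
  apply Summable.of_nonneg_of_le (fun j => mul_nonneg (hw j).1 (sq_nonneg _))
    (fun j => mul_le_mul_of_nonneg_right (hw j).2 (sq_nonneg _)) ((summable_sq f).mul_left B)

lemma tsum_wsq_le {w : ℤ → ℝ} {B : ℝ} (hw : ∀ j, 0 ≤ w j ∧ w j ≤ B) (f : L2Z) :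
    ∑' j, w j * (f j)^2 ≤ B * ‖f‖^2 := by
  rw [norm_sq_eq_tsum, ← tsum_mul_left]
  exact Summable.tsum_le_tsum (fun j => mul_le_mul_of_nonneg_right (hw j).2 (sq_nonneg _))
    (tsum_wsq_summable hw f) ((summable_sq f).mul_left B)

lemma le_tsum_wsq {w : ℤ → ℝ} {A B : ℝ} (hw : ∀ j, 0 ≤ w j ∧ w j ≤ B)
    (hA : ∀ j, A ≤ w j) (f : L2Z) :
    A * ‖f‖^2 ≤ ∑' j, w j * (f j)^2 := by
  rw [norm_sq_eq_tsum, ← tsum_mul_left]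
  exact Summable.tsum_le_tsum (fun j => mul_le_mul_of_nonneg_right (hA j) (sq_nonneg _))
    ((summable_sq f).mul_left A) (tsum_wsq_summable hw f)

lemma telescope (a b r q : L2Z) :
    (∑' j, (b (j+1) - b j + r j) * a j) + (∑' j, (a j - a (j-1) + q j) * b j)
      = ⟪r, a⟫ + ⟪q, b⟫ := by
  have hb1 : Summable (fun j => (b (j+1))^2) := by
    have h := ((Equiv.addRight (1:ℤ)).summable_iff (f := fun j => (b j)^2)).2 (summable_sq b)
    simpa [Function.comp_def] using h
  have ha1 : Summable (fun j => (a (j-1))^2) := by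
    have h := ((Equiv.subRight (1:ℤ)).summable_iff (f := fun j => (a j)^2)).2 (summable_sq a)
    simpa [Function.comp_def] using h
  have S1 : Summable (fun j => b (j+1) * a j) := summable_mul_sq hb1 (summable_sq a)
  have S2 : Summable (fun j => b j * a j) := summable_mul_sq (summable_sq b) (summable_sq a)
  have S3 : Summable (fun j => r j * a j) := summable_mul_sq (summable_sq r) (summable_sq a)
  have S4 : Summable (fun j => a j * b j) := summable_mul_sq (summable_sq a) (summable_sq b)
  have S5 : Summable (fun j => a (j-1) * b j) := summable_mul_sq ha1 (summable_sq b)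
  have S6 : Summable (fun j => q j * b j) := summable_mul_sq (summable_sq q) (summable_sq b)
  have e1 : ∑' j, (b (j+1) - b j + r j) * a j
      = ((∑' j, b (j+1) * a j) - ∑' j, b j * a j) + ∑' j, r j * a j := by
    rw [show (fun j => (b (j+1) - b j + r j) * a j)
        = fun j => (b (j+1) * a j - b j * a j) + r j * a j from funext fun j => by ring]
    rw [Summable.tsum_add (S1.sub S2) S3, Summable.tsum_sub S1 S2]
  have e2 : ∑' j, (a j - a (j-1) + q j) * b j
      = ((∑' j, a j * b j) - ∑' j, a (j-1) * b j) + ∑' j, q j * b j := by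
    rw [show (fun j => (a j - a (j-1) + q j) * b j)
        = fun j => (a j * b j - a (j-1) * b j) + q j * b j from funext fun j => by ring]
    rw [Summable.tsum_add (S4.sub S5) S6, Summable.tsum_sub S4 S5]
  have e3 : ∑' j, a (j-1) * b j = ∑' j, b (j+1) * a j := by
    have := (Equiv.addRight (1:ℤ)).tsum_eq (fun j => a (j-1) * b j)
    simp only [Equiv.coe_addRight, add_sub_cancel_right] at this
    rw [← this]
    exact tsum_congr fun j => mul_comm _ _
  have e4 : ∑' j, b j * a j = ∑' j, a j * b j := tsum_congr fun j => mul_comm _ _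
  rw [e1, e2, e3, e4, inner_eq_tsum_mul, inner_eq_tsum_mul]
  ring

/-- the energy estimate.  For coefficients `0 < a_m ≤ m(j) ≤ b_m`,
`0 < a_k ≤ k(j) ≤ b_k`, there is a constant `C` depending only on `a_k, b_k, a_m, b_m`
such that any `C¹` curves `η, ξ : ℝ → ℓ²(ℤ)` and continuous `ρ₁, ρ₂ : ℝ → ℓ²(ℤ)`
satisfying `η' = k (δ⁺ξ + ρ₁)` and `ξ' = (δ⁻η + ρ₂)/m` componentwise obey
`sup_{|t| ≤ T} ‖(η,ξ)(t)‖ ≤ C ‖(η,ξ)(0)‖ + C T sup_{|t| ≤ T} ‖(ρ₁,ρ₂)(t)‖`. -/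
theorem energy_estimate (am bm ak bk : ℝ) (ham : 0 < am) (hak : 0 < ak) :
    ∃ C : ℝ, 0 < C ∧
      ∀ m k : ℤ → ℝ,
        (∀ j, m j ∈ Set.Icc am bm) → (∀ j, k j ∈ Set.Icc ak bk) →
        ∀ T : ℝ, 0 < T →
        ∀ η ξ ρ₁ ρ₂ : ℝ → lp (fun _ : ℤ => ℝ) 2,
          ContDiff ℝ 1 η → ContDiff ℝ 1 ξ → Continuous ρ₁ → Continuous ρ₂ →
          (∀ (t : ℝ) (j : ℤ), (deriv η t) j =
            k j * ((ξ t) (j + 1) - (ξ t) j +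
              (ρ₁ t) j)) →
          (∀ (t : ℝ) (j : ℤ), (deriv ξ t) j =
            ((η t) j - (η t) (j - 1) +
              (ρ₂ t) j) / m j) →
          ∀ S : ℝ,
            (∀ t : ℝ, |t| ≤ T → Real.sqrt (‖ρ₁ t‖ ^ 2 + ‖ρ₂ t‖ ^ 2) ≤ S) →
            ∀ t : ℝ, |t| ≤ T →
              Real.sqrt (‖η t‖ ^ 2 + ‖ξ t‖ ^ 2) ≤
                C * Real.sqrt (‖η 0‖ ^ 2 + ‖ξ 0‖ ^ 2) + C * T * S := by
  classical
  set c1 : ℝ := min bk⁻¹ am with hc1def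
  set c2 : ℝ := max ak⁻¹ bm with hc2def
  refine ⟨max (max (Real.sqrt c2 / Real.sqrt c1) (1/c1)) 1,
    lt_of_lt_of_le one_pos (le_max_right _ _), ?_⟩
  set C : ℝ := max (max (Real.sqrt c2 / Real.sqrt c1) (1/c1)) 1 with hCdef
  intro m k hm hk T hT η ξ ρ₁ ρ₂ hη hξ hρ₁c hρ₂c heq1 heq2 S hS t ht
  -- basic positivity
  have hbk : 0 < bk := hak.trans_le ((hk 0).1.trans (hk 0).2)
  have hbm : 0 < bm := ham.trans_le ((hm 0).1.trans (hm 0).2)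
  have hc1 : 0 < c1 := lt_min (inv_pos.2 hbk) ham
  have hc2 : 0 < c2 := lt_of_lt_of_le (inv_pos.2 hak) (le_max_left _ _)
  have hkpos : ∀ j, 0 < k j := fun j => hak.trans_le (hk j).1
  have hmpos : ∀ j, 0 < m j := fun j => ham.trans_le (hm j).1
  have hS0 : 0 ≤ S := le_trans (Real.sqrt_nonneg _) (hS 0 (by simpa using hT.le))
  -- the diagonal operators
  have hwk : ∀ j, |(k j)⁻¹| ≤ ak⁻¹ := fun j => by
    rw [abs_of_nonneg (inv_nonneg.2 (hkpos j).le)]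
    exact inv_anti₀ hak (hk j).1
  have hwm : ∀ j, |m j| ≤ bm := fun j => by
    rw [abs_of_nonneg (hmpos j).le]; exact (hm j).2
  set Dk : L2Z →L[ℝ] L2Z := mulOp (fun j => (k j)⁻¹) (inv_nonneg.2 hak.le) hwk with hDk
  set Dm : L2Z →L[ℝ] L2Z := mulOp m hbm.le hwm with hDm
  set E : ℝ → ℝ := fun s => ⟪Dk (η s), η s⟫ + ⟪Dm (ξ s), ξ s⟫ with hEdef
  have innerDk : ∀ f g : L2Z, ⟪Dk f, g⟫ = ∑' j, (k j)⁻¹ * f j * g j := fun f g => by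
    rw [inner_eq_tsum_mul]
    exact tsum_congr fun j => by rw [hDk, mulOp_apply]
  have innerDm : ∀ f g : L2Z, ⟪Dm f, g⟫ = ∑' j, m j * f j * g j := fun f g => by
    rw [inner_eq_tsum_mul]
    exact tsum_congr fun j => by rw [hDm, mulOp_apply]
  have hwk' : ∀ j, 0 ≤ (k j)⁻¹ ∧ (k j)⁻¹ ≤ ak⁻¹ := fun j =>
    ⟨inv_nonneg.2 (hkpos j).le, inv_anti₀ hak (hk j).1⟩
  have hwm' : ∀ j, 0 ≤ m j ∧ m j ≤ bm := fun j => ⟨(hmpos j).le, (hm j).2⟩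
  have hEtsum : ∀ s : ℝ, E s = (∑' j, (k j)⁻¹ * (η s j)^2) + ∑' j, m j * (ξ s j)^2 := by
    intro s
    rw [hEdef]
    simp only
    rw [innerDk, innerDm]
    rw [tsum_congr (fun j => by ring : ∀ j, (k j)⁻¹ * η s j * η s j = (k j)⁻¹ * (η s j)^2),
      tsum_congr (fun j => by ring : ∀ j, m j * ξ s j * ξ s j = m j * (ξ s j)^2)]
  -- energy equivalence
  have hElow : ∀ s : ℝ, c1 * (‖η s‖^2 + ‖ξ s‖^2) ≤ E s := by
    intro s
    rw [hEtsum s]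
    have h1 : bk⁻¹ * ‖η s‖^2 ≤ ∑' j, (k j)⁻¹ * (η s j)^2 :=
      le_tsum_wsq hwk' (fun j => inv_anti₀ (hkpos j) (hk j).2) (η s)
    have h2 : am * ‖ξ s‖^2 ≤ ∑' j, m j * (ξ s j)^2 :=
      le_tsum_wsq hwm' (fun j => (hm j).1) (ξ s)
    have e1 : c1 ≤ bk⁻¹ := min_le_left _ _
    have e2 : c1 ≤ am := min_le_right _ _
    nlinarith [sq_nonneg ‖η s‖, sq_nonneg ‖ξ s‖]
  have hEhigh : ∀ s : ℝ, E s ≤ c2 * (‖η s‖^2 + ‖ξ s‖^2) := by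
    intro s
    rw [hEtsum s]
    have h1 : ∑' j, (k j)⁻¹ * (η s j)^2 ≤ ak⁻¹ * ‖η s‖^2 := tsum_wsq_le hwk' (η s)
    have h2 : ∑' j, m j * (ξ s j)^2 ≤ bm * ‖ξ s‖^2 := tsum_wsq_le hwm' (ξ s)
    have e1 : ak⁻¹ ≤ c2 := le_max_left _ _
    have e2 : bm ≤ c2 := le_max_right _ _
    nlinarith [sq_nonneg ‖η s‖, sq_nonneg ‖ξ s‖]
  have hE0 : ∀ s : ℝ, 0 ≤ E s := fun s =>
    le_trans (by positivity) (hElow s)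
  -- the derivative of the energy
  set E' : ℝ → ℝ := fun s => 2 * (⟪ρ₁ s, η s⟫ + ⟪ρ₂ s, ξ s⟫) with hE'def
  have hEderiv : ∀ s : ℝ, HasDerivAt E (E' s) s := by
    intro s
    have hdη := ((hη.differentiable one_ne_zero) s).hasDerivAt
    have hdξ := ((hξ.differentiable one_ne_zero) s).hasDerivAt
    have h1 : HasDerivAt (fun u => Dk (η u)) (Dk (deriv η s)) s :=
      (Dk.hasFDerivAt).comp_hasDerivAt s hdη
    have h2 : HasDerivAt (fun u => Dm (ξ u)) (Dm (deriv ξ s)) s :=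
      (Dm.hasFDerivAt).comp_hasDerivAt s hdξ
    have H1 := (HasDerivAt.inner ℝ h1 hdη)
    have H2 := (HasDerivAt.inner ℝ h2 hdξ)
    have H := H1.add H2
    convert H using 1
    case e'_4 => rfl
    case e'_5 => rfl
    case e'_8 => rfl
    -- identify the derivative value
    have k1 : ∀ f : L2Z, ⟪(Dk (η s) : L2Z), f⟫ = ⟪(Dk f : L2Z), η s⟫ := fun f => by
      rw [innerDk, innerDk]; exact tsum_congr fun j => by ring
    have k2 : ∀ f : L2Z, ⟪(Dm (ξ s) : L2Z), f⟫ = ⟪(Dm f : L2Z), ξ s⟫ := fun f => by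
      rw [innerDm, innerDm]; exact tsum_congr fun j => by ring
    have v1 : ⟪(Dk (deriv η s) : L2Z), η s⟫
        = ∑' j, (ξ s (j+1) - ξ s j + ρ₁ s j) * η s j := by
      rw [innerDk]
      refine tsum_congr fun j => ?_
      rw [heq1 s j]
      have hne := (hkpos j).ne'
      field_simp
    have v2 : ⟪(Dm (deriv ξ s) : L2Z), ξ s⟫
        = ∑' j, (η s j - η s (j-1) + ρ₂ s j) * ξ s j := by
      rw [innerDm]
      refine tsum_congr fun j => ?_
      rw [heq2 s j]
      have hne := (hmpos j).ne'
      field_simp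
    rw [k1, k2, v1, v2]
    have := telescope (η s) (ξ s) (ρ₁ s) (ρ₂ s)
    rw [hE'def]
    simp only
    linarith [this]
  -- Gronwall for √(E + ε)
  have key : ∀ ε : ℝ, 0 < ε →
      Real.sqrt (‖η t‖^2 + ‖ξ t‖^2) ≤
        (Real.sqrt c2 / Real.sqrt c1) * Real.sqrt (‖η 0‖^2 + ‖ξ 0‖^2)
          + (1/c1) * T * S + Real.sqrt ε / Real.sqrt c1 := by
    intro ε hε
    set G : ℝ → ℝ := fun s => Real.sqrt (E s + ε) with hGdef
    set G' : ℝ → ℝ := fun s => E' s / (2 * Real.sqrt (E s + ε)) with hG'def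
    have hGd : ∀ s : ℝ, HasDerivAt G (G' s) s := fun s =>
      HasDerivAt.sqrt ((hEderiv s).add_const ε) (by have := hE0 s; linarith : (0:ℝ) < E s + ε).ne'
    have sqc1 : 0 < Real.sqrt c1 := Real.sqrt_pos.2 hc1
    -- bound on |G'| on [-T, T]
    have hbound : ∀ x ∈ Set.Icc (-T) T, ‖G' x‖ ≤ S / Real.sqrt c1 := by
      intro x hx
      have hxT : |x| ≤ T := abs_le.2 ⟨hx.1, hx.2⟩
      have hEε : (0:ℝ) < E x + ε := by have := hE0 x; linarith
      have hNx : Real.sqrt c1 * Real.sqrt (‖η x‖^2 + ‖ξ x‖^2) ≤ Real.sqrt (E x + ε) := by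
        rw [← Real.sqrt_mul hc1.le]
        exact Real.sqrt_le_sqrt (le_trans (hElow x) (by linarith))
      have hip : |⟪ρ₁ x, η x⟫ + ⟪ρ₂ x, ξ x⟫| ≤ S * Real.sqrt (‖η x‖^2 + ‖ξ x‖^2) := by
        have i1 : |⟪ρ₁ x, η x⟫| ≤ ‖ρ₁ x‖ * ‖η x‖ := abs_real_inner_le_norm _ _
        have i2 : |⟪ρ₂ x, ξ x⟫| ≤ ‖ρ₂ x‖ * ‖ξ x‖ := abs_real_inner_le_norm _ _
        have i3 := cauchy2 (norm_nonneg (ρ₁ x)) (norm_nonneg (ρ₂ x))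
          (norm_nonneg (η x)) (norm_nonneg (ξ x))
        have i4 : Real.sqrt (‖ρ₁ x‖^2 + ‖ρ₂ x‖^2) * Real.sqrt (‖η x‖^2 + ‖ξ x‖^2)
            ≤ S * Real.sqrt (‖η x‖^2 + ‖ξ x‖^2) :=
          mul_le_mul_of_nonneg_right (hS x hxT) (Real.sqrt_nonneg _)
        calc |⟪ρ₁ x, η x⟫ + ⟪ρ₂ x, ξ x⟫| ≤ |⟪ρ₁ x, η x⟫| + |⟪ρ₂ x, ξ x⟫| := abs_add_le _ _
          _ ≤ ‖ρ₁ x‖ * ‖η x‖ + ‖ρ₂ x‖ * ‖ξ x‖ := add_le_add i1 i2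
          _ ≤ _ := le_trans i3 i4
      rw [hG'def]
      simp only [Real.norm_eq_abs]
      rw [abs_div, abs_of_pos (by have := Real.sqrt_pos.2 hEε; linarith : (0:ℝ) < 2 * Real.sqrt (E x + ε))]
      rw [div_le_div_iff₀ (by have := Real.sqrt_pos.2 hEε; linarith) sqc1]
      have hNε : Real.sqrt (‖η x‖^2 + ‖ξ x‖^2) * Real.sqrt c1 ≤ Real.sqrt (E x + ε) := by
        linarith [hNx]
      have habs : |E' x| ≤ 2 * (S * Real.sqrt (‖η x‖^2 + ‖ξ x‖^2)) := by
        rw [hE'def]; simp only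
        rw [abs_mul, abs_two]
        linarith [hip]
      have hsq : 0 < Real.sqrt (E x + ε) := Real.sqrt_pos.2 hEε
      calc |E' x| * Real.sqrt c1 ≤ 2 * (S * Real.sqrt (‖η x‖^2 + ‖ξ x‖^2)) * Real.sqrt c1 :=
            mul_le_mul_of_nonneg_right habs sqc1.le
        _ = 2 * S * (Real.sqrt (‖η x‖^2 + ‖ξ x‖^2) * Real.sqrt c1) := by ring
        _ ≤ 2 * S * Real.sqrt (E x + ε) := by
            apply mul_le_mul_of_nonneg_left hNε (by positivity)
        _ = S * (2 * Real.sqrt (E x + ε)) := by ring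
    -- mean value
    have hconv : Convex ℝ (Set.Icc (-T) T) := convex_Icc _ _
    have hmem0 : (0:ℝ) ∈ Set.Icc (-T) T := by constructor <;> linarith
    have hmemt : t ∈ Set.Icc (-T) T := abs_le.1 ht
    have hmv := hconv.norm_image_sub_le_of_norm_hasDerivWithin_le
      (fun x _ => (hGd x).hasDerivWithinAt) hbound hmem0 hmemt
    -- conclude
    have hGt : G t ≤ G 0 + (S / Real.sqrt c1) * T := by
      have h1 : |G t - G 0| ≤ (S / Real.sqrt c1) * |t - 0| := by
        simpa [Real.norm_eq_abs] using hmv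
      have h2 : (S / Real.sqrt c1) * |t - 0| ≤ (S / Real.sqrt c1) * T := by
        apply mul_le_mul_of_nonneg_left _ (by positivity)
        simpa using ht
      have := abs_le.1 (h1.trans h2)
      linarith [this.2]
    have hlow : Real.sqrt c1 * Real.sqrt (‖η t‖^2 + ‖ξ t‖^2) ≤ G t := by
      rw [hGdef]; simp only
      rw [← Real.sqrt_mul hc1.le]
      exact Real.sqrt_le_sqrt (le_trans (hElow t) (by linarith [hε]))
    have hhigh : G 0 ≤ Real.sqrt c2 * Real.sqrt (‖η 0‖^2 + ‖ξ 0‖^2) + Real.sqrt ε := by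
      rw [hGdef]; simp only
      calc Real.sqrt (E 0 + ε) ≤ Real.sqrt (E 0) + Real.sqrt ε := sqrt_add_le' (hE0 0) hε.le
        _ ≤ Real.sqrt (c2 * (‖η 0‖^2 + ‖ξ 0‖^2)) + Real.sqrt ε := by
            gcongr
            exact hEhigh 0
        _ = Real.sqrt c2 * Real.sqrt (‖η 0‖^2 + ‖ξ 0‖^2) + Real.sqrt ε := by
            rw [Real.sqrt_mul hc2.le]
    -- put together
    have chain : Real.sqrt c1 * Real.sqrt (‖η t‖^2 + ‖ξ t‖^2)
        ≤ Real.sqrt c2 * Real.sqrt (‖η 0‖^2 + ‖ξ 0‖^2) + Real.sqrt ε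
          + (S / Real.sqrt c1) * T := by linarith
    rw [← le_div_iff₀' sqc1] at chain
    have hs1sq : Real.sqrt c1 * Real.sqrt c1 = c1 := Real.mul_self_sqrt hc1.le
    have halg : (Real.sqrt c2 * Real.sqrt (‖η 0‖^2 + ‖ξ 0‖^2) + Real.sqrt ε
            + (S / Real.sqrt c1) * T) / Real.sqrt c1
        = (Real.sqrt c2 / Real.sqrt c1) * Real.sqrt (‖η 0‖^2 + ‖ξ 0‖^2)
          + (1/c1) * T * S + Real.sqrt ε / Real.sqrt c1 := by
      rw [show (1:ℝ)/c1 = 1/(Real.sqrt c1 * Real.sqrt c1) from by rw [hs1sq]]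
      ring
    rw [halg] at chain
    exact chain
  -- pass to the limit ε → 0 and absorb constants
  have final : Real.sqrt (‖η t‖^2 + ‖ξ t‖^2) ≤
      (Real.sqrt c2 / Real.sqrt c1) * Real.sqrt (‖η 0‖^2 + ‖ξ 0‖^2) + (1/c1) * T * S := by
    apply le_of_forall_pos_le_add
    intro δ hδ
    have sqc1 : 0 < Real.sqrt c1 := Real.sqrt_pos.2 hc1
    have := key ((δ * Real.sqrt c1)^2) (by positivity)
    rw [Real.sqrt_sq (by positivity)] at this
    calc Real.sqrt (‖η t‖^2 + ‖ξ t‖^2)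
        ≤ (Real.sqrt c2 / Real.sqrt c1) * Real.sqrt (‖η 0‖^2 + ‖ξ 0‖^2)
          + (1/c1) * T * S + (δ * Real.sqrt c1) / Real.sqrt c1 := this
      _ = (Real.sqrt c2 / Real.sqrt c1) * Real.sqrt (‖η 0‖^2 + ‖ξ 0‖^2)
          + (1/c1) * T * S + δ := by
          rw [mul_div_assoc, div_self sqc1.ne']
          ring
  have hC1 : Real.sqrt c2 / Real.sqrt c1 ≤ C := le_trans (le_max_left _ _) (le_max_left _ _)
  have hC2 : 1/c1 ≤ C := le_trans (le_max_right _ _) (le_max_left _ _)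
  have hN0 : 0 ≤ Real.sqrt (‖η 0‖^2 + ‖ξ 0‖^2) := Real.sqrt_nonneg _
  calc Real.sqrt (‖η t‖^2 + ‖ξ t‖^2)
      ≤ (Real.sqrt c2 / Real.sqrt c1) * Real.sqrt (‖η 0‖^2 + ‖ξ 0‖^2) + (1/c1) * T * S := final
    _ ≤ C * Real.sqrt (‖η 0‖^2 + ‖ξ 0‖^2) + C * T * S := by
        have h1 : (Real.sqrt c2 / Real.sqrt c1) * Real.sqrt (‖η 0‖^2 + ‖ξ 0‖^2)
            ≤ C * Real.sqrt (‖η 0‖^2 + ‖ξ 0‖^2) := mul_le_mul_of_nonneg_right hC1 hN0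
        have h2 : (1/c1) * T * S ≤ C * T * S := by
          apply mul_le_mul_of_nonneg_right _ hS0
          exact mul_le_mul_of_nonneg_right hC2 hT.le
        linarith
end
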